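/- Let φ: M → N be an injective homomorphism of free modules of finite rank over a discrete valuation ring R with uniformizer p and residue field k, with rank M = m ≥ 1. Define M_i = {x ∈ M : φ(x) ∈ p^i N} and let M̄_i denote the image of M_i in M̄ = M/pM. Then there exists a smallest ℓ with M̄_ℓ = 0, and for 0 ≤ i ≤ ℓ−1, p^i occurs as an invariant factor of φ with multiplicity dim_k(M̄_i / M̄_{i+1}). -/

import Mathlib

open Module

open Pointwise in
private lemma mem_span_smul_top_iff' {R : Type*} [CommRing R] {M : Type*} [AddCommGroup M]
    [Module R M] {ι : Type*} [Fintype ι] (b : Basis ι R M) (r : R) (x : M) :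
    x ∈ (Ideal.span {r} : Ideal R) • (⊤ : Submodule R M) ↔ ∀ i, r ∣ b.repr x i := by
  rw [Submodule.ideal_span_singleton_smul]
  constructor
  · intro h
    obtain ⟨y, -, rfl⟩ := Set.mem_smul_set.mp h
    intro i
    rw [map_smul, Finsupp.smul_apply, smul_eq_mul]
    exact ⟨_, rfl⟩
  · intro h
    choose c hc using h
    refine Set.mem_smul_set.mpr ⟨b.equivFun.symm c, trivial, ?_⟩
    apply b.equivFun.injective
    ext i
    rw [map_smul]
    simp only [Pi.smul_apply, b.equivFun.apply_symm_apply, smul_eq_mul, Basis.equivFun_apply]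
    exact (hc i).symm

private lemma exists_sorted_snf
    (R : Type*) [CommRing R] [IsDomain R] [IsDiscreteValuationRing R]
    (p : R) (hp : Irreducible p)
    (M N : Type*) [AddCommGroup M] [Module R M] [AddCommGroup N] [Module R N]
    (m nN : ℕ)
    (bM : Basis (Fin m) R M) (bN : Basis (Fin nN) R N)
    (φ : M →ₗ[R] N) (hφ : Function.Injective φ) :
    ∃ (hmn : m ≤ nN) (a : Fin m → ℕ) (b2 : Basis (Fin m) R M) (bN' : Basis (Fin nN) R N),
      Monotone a ∧
      ∀ t : Fin m, φ (b2 t) = p ^ a t • bN' ⟨t.1, lt_of_lt_of_le t.2 hmn⟩ := by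
  classical
  obtain ⟨n, snf⟩ := (LinearMap.range φ).smithNormalForm bN
  set eM : M ≃ₗ[R] LinearMap.range φ := LinearEquiv.ofInjective φ hφ with heM
  have hkey : ∀ x : M, (eM x : N) = φ x := fun x => by rw [heM]; simp
  have e : Fin m ≃ Fin n := (bM.map eM).indexEquiv snf.bN
  set b0 : Basis (Fin m) R M := (snf.bN.map eM.symm).reindex e.symm with hb0
  have hb0' : ∀ t, φ (b0 t) = snf.a (e t) • snf.bM (snf.f (e t)) := by
    intro t
    have h1 : φ (b0 t) = (snf.bN (e t) : N) := by
      rw [hb0]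
      simp only [Basis.reindex_apply, Equiv.symm_symm, Basis.map_apply]
      rw [← hkey, eM.apply_symm_apply]
    rw [h1, snf.snf (e t)]
  have hb0ne : ∀ t, snf.a (e t) ≠ 0 := by
    intro t ha
    have h1 : φ (b0 t) = 0 := by rw [hb0' t, ha, zero_smul]
    exact b0.ne_zero t (hφ (by rw [h1, map_zero]))
  choose v u hu using fun t => IsDiscreteValuationRing.eq_unit_mul_pow_irreducible (hb0ne t) hp
  set g : Fin m ↪ Fin nN := (e.toEmbedding).trans snf.f with hg
  have hmn : m ≤ nN := Fintype.card_fin m ▸ Fintype.card_fin nN ▸ Fintype.card_le_of_embedding g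
  set w : Fin nN → Rˣ := fun j => if h : ∃ t, g t = j then u h.choose else 1 with hw
  have hwg : ∀ t, w (g t) = u t := by
    intro t
    have h : ∃ t', g t' = g t := ⟨t, rfl⟩
    have h2 : h.choose = t := g.injective h.choose_spec
    rw [hw]; simp only [dif_pos h, h2]
  set b1 : Basis (Fin nN) R N := snf.bM.unitsSMul w with hb1
  have hb1' : ∀ t, φ (b0 t) = p ^ v t • b1 (g t) := by
    intro t
    rw [hb0' t, hu t, hb1, Basis.unitsSMul_apply, hwg t]
    rw [mul_comm, mul_smul, Units.smul_def]
    rfl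
  set σ := Tuple.sort v with hσ
  set a : Fin m → ℕ := v ∘ σ with ha
  have hamono : Monotone a := Tuple.monotone_sort v
  set b2 : Basis (Fin m) R M := b0.reindex σ.symm with hb2
  set g' : Fin m ↪ Fin nN := (σ.toEmbedding).trans g with hg'
  have hb2' : ∀ t, φ (b2 t) = p ^ a t • b1 (g' t) := by
    intro t
    rw [hb2, Basis.reindex_apply, Equiv.symm_symm]
    exact hb1' (σ t)
  set hq : Fin m ≃ {j : Fin nN // (j : ℕ) < m} :=
    { toFun := fun t => ⟨⟨t.1, lt_of_lt_of_le t.2 hmn⟩, t.2⟩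
      invFun := fun j => ⟨j.1.1, j.2⟩
      left_inv := fun t => rfl
      right_inv := fun j => rfl } with hhq
  set eP : {j : Fin nN // j ∈ Set.range g'} ≃ Fin m := (Equiv.ofInjective g' g'.injective).symm
    with heP
  set τ : Equiv.Perm (Fin nN) := Equiv.extendSubtype (eP.trans hq) with hτ
  have hτg : ∀ t, τ (g' t) = ⟨t.1, lt_of_lt_of_le t.2 hmn⟩ := by
    intro t
    have hmem : g' t ∈ Set.range g' := ⟨t, rfl⟩
    rw [hτ, Equiv.extendSubtype_apply_of_mem _ _ hmem]
    have h3 : eP ⟨g' t, hmem⟩ = t := by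
      apply g'.injective
      have h2 := (Equiv.ofInjective g' g'.injective).apply_symm_apply ⟨g' t, hmem⟩
      rw [heP]
      simp only [Equiv.ofInjective_apply] at h2
      exact congrArg Subtype.val h2
    simp only [Equiv.trans_apply, h3]
    rfl
  set bN' : Basis (Fin nN) R N := b1.reindex τ with hbN'
  refine ⟨hmn, a, b2, bN', hamono, fun t => ?_⟩
  rw [hb2' t, hbN', ← hτg t, Basis.reindex_apply, Equiv.symm_apply_apply]

theorem dvr_filtration_invariant_factors
    (R : Type*) [CommRing R] [IsDomain R] [IsDiscreteValuationRing R]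
    (p : R) (hp : Irreducible p)
    (M N : Type*) [AddCommGroup M] [Module R M] [AddCommGroup N] [Module R N]
    (m nN : ℕ) (hm : 1 ≤ m)
    (bM : Module.Basis (Fin m) R M) (bN : Module.Basis (Fin nN) R N)
    (φ : M →ₗ[R] N) (hφ : Function.Injective φ) :
    ∀ Mi : ℕ → Submodule R M,
      (∀ i, Mi i = Submodule.comap φ ((Ideal.span {p ^ i} : Ideal R) • (⊤ : Submodule R N))) →
    ∀ Mbar : ℕ → Submodule R (M ⧸ ((Ideal.span {p} : Ideal R) • (⊤ : Submodule R M))),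
      (∀ i, Mbar i = (Mi i).map
        (Submodule.mkQ ((Ideal.span {p} : Ideal R) • (⊤ : Submodule R M)))) →
    ∃ ℓ : ℕ, Mbar ℓ = ⊥ ∧ (∀ i < ℓ, Mbar i ≠ ⊥) ∧
      ∃ (a : Fin m → ℕ), Monotone a ∧
        (∃ (bM' : Module.Basis (Fin m) R M) (bN' : Module.Basis (Fin nN) R N),
          ∀ (i : Fin m) (j : Fin nN),
            LinearMap.toMatrix bM' bN' φ j i =
              if (j : ℕ) = (i : ℕ) then p ^ (a i) else 0) ∧
        ∀ i < ℓ, ∃ d : ℕ,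
          Nonempty ((↥(Mbar i) ⧸
              Submodule.comap (Mbar i).subtype (Mbar (i + 1))) ≃ₗ[R]
            (Fin d → R ⧸ (Ideal.span {p} : Ideal R))) ∧
          (Finset.univ.filter (fun j : Fin m => a j = i)).card = d := by
  classical
  set S : Submodule R M := (Ideal.span {p} : Ideal R) • (⊤ : Submodule R M) with hS
  intro Mi hMiDef Mbar hMbarDef
  obtain ⟨hmn, a, b2, bN', hamono, hdiag⟩ :=
    exists_sorted_snf R p hp M N m nN bM bN φ hφ
  -- coordinates of φ x
  have hφrepr : ∀ (x : M) (j : Fin nN), bN'.repr (φ x) j =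
      if h : (j : ℕ) < m then b2.repr x ⟨j.1, h⟩ * p ^ a ⟨j.1, h⟩ else 0 := by
    intro x j
    have hx : φ x = ∑ t : Fin m,
        (b2.repr x t * p ^ a t) • bN' ⟨t.1, lt_of_lt_of_le t.2 hmn⟩ := by
      conv_lhs => rw [← b2.sum_repr x]
      rw [map_sum]
      exact Finset.sum_congr rfl fun t _ => by rw [map_smul, hdiag t, smul_smul]
    rw [hx, map_sum, Finset.sum_apply']
    simp only [map_smul, Finsupp.smul_apply, Basis.repr_self, Finsupp.single_apply,
      smul_eq_mul, mul_ite, mul_one, mul_zero]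
    by_cases h : (j : ℕ) < m
    · rw [dif_pos h, Finset.sum_eq_single (⟨j.1, h⟩ : Fin m)]
      · rw [if_pos (Fin.ext rfl)]
      · intro t _ ht
        rw [if_neg]
        intro hc
        exact ht (by apply Fin.ext; simpa using congrArg Fin.val hc)
      · intro ht; exact absurd (Finset.mem_univ _) ht
    · rw [dif_neg h]
      refine Finset.sum_eq_zero fun t _ => ?_
      rw [if_neg]
      intro hc
      exact h ((congrArg Fin.val hc) ▸ t.2)
  -- membership in Mi
  have hMi : ∀ (i : ℕ) (x : M), x ∈ Mi i ↔ ∀ t : Fin m, p ^ i ∣ b2.repr x t * p ^ a t := by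
    intro i x
    rw [hMiDef i, Submodule.mem_comap, mem_span_smul_top_iff' bN']
    constructor
    · intro h t
      have h2 := h ⟨t.1, lt_of_lt_of_le t.2 hmn⟩
      rw [hφrepr] at h2
      simpa using h2
    · intro h j
      rw [hφrepr]
      split
      · exact h _
      · exact dvd_zero _
  -- the coordinate map mod p
  set θ : M →ₗ[R] (Fin m → R ⧸ (Ideal.span {p} : Ideal R)) :=
    LinearMap.pi (fun t => ((Ideal.span {p} : Ideal R).mkQ).comp (b2.coord t)) with hθ
  have hθval : ∀ (x : M) (t : Fin m),
      θ x t = Submodule.Quotient.mk (b2.repr x t) := by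
    intro x t
    rw [hθ]
    simp [LinearMap.pi_apply, Basis.coord_apply]
  have hθker : ∀ x : M, θ x = 0 ↔ x ∈ S := by
    intro x
    rw [hS, mem_span_smul_top_iff' b2]
    constructor
    · intro h t
      have := congrFun h t
      rw [hθval] at this
      rw [← Ideal.mem_span_singleton]
      exact (Submodule.Quotient.mk_eq_zero _).mp this
    · intro h
      funext t
      rw [hθval]
      exact (Submodule.Quotient.mk_eq_zero _).mpr (Ideal.mem_span_singleton.mpr (h t))
  -- lifted coordinate map on the quotient
  set Θ : (M ⧸ S) →ₗ[R] (Fin m → R ⧸ (Ideal.span {p} : Ideal R)) :=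
    S.liftQ θ (fun x hx => LinearMap.mem_ker.mpr ((hθker x).mpr hx)) with hΘ
  have hΘmk : ∀ x : M, Θ (S.mkQ x) = θ x := by
    intro x
    rw [hΘ, Submodule.mkQ_apply, Submodule.liftQ_apply]
  have hΘzero : ∀ z : M ⧸ S, Θ z = 0 → z = 0 := by
    intro z hz
    obtain ⟨x, rfl⟩ := S.mkQ_surjective z
    rw [hΘmk] at hz
    rw [Submodule.mkQ_apply, Submodule.Quotient.mk_eq_zero]
    exact (hθker x).mp hz
  -- membership in Mbar
  have hMbar : ∀ (i : ℕ) (z : M ⧸ S), z ∈ Mbar i ↔ ∀ t : Fin m, a t < i → Θ z t = 0 := by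
    intro i z
    rw [hMbarDef i]
    constructor
    · rintro ⟨x, hx, rfl⟩ t hti
      have hd := (hMi i x).mp hx t
      have hpd : p ∣ b2.repr x t := by
        have h1 : (p : R) ^ (a t + 1) ∣ b2.repr x t * p ^ a t :=
          dvd_trans (pow_dvd_pow p hti) hd
        obtain ⟨c, hc⟩ := h1
        have h2 : b2.repr x t * p ^ a t = (p * c) * p ^ a t := by
          rw [hc, pow_succ]; ring
        exact ⟨c, mul_right_cancel₀ (pow_ne_zero _ hp.ne_zero) h2⟩
      rw [hΘmk, hθval]
      exact (Submodule.Quotient.mk_eq_zero _).mpr (Ideal.mem_span_singleton.mpr hpd)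
    · intro h
      obtain ⟨x, rfl⟩ := S.mkQ_surjective z
      set c : Fin m → R := fun t => if a t < i then 0 else b2.repr x t with hc
      set x' := b2.equivFun.symm c with hx'
      have hrepr : ∀ t, b2.repr x' t = c t := by
        intro t
        rw [hx', ← Basis.equivFun_apply, b2.equivFun.apply_symm_apply]
      have hx'mem : x' ∈ Mi i := by
        rw [hMi i x']
        intro t
        rw [hrepr t]
        simp only [hc]
        by_cases hlt : a t < i
        · simp [hlt]
        · rw [if_neg hlt]
          exact Dvd.dvd.mul_left (pow_dvd_pow p (le_of_not_gt hlt)) _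
      refine Submodule.mem_map.mpr ⟨x', hx'mem, ?_⟩
      rw [Submodule.mkQ_apply, Submodule.mkQ_apply, Submodule.Quotient.eq]
      rw [hS, mem_span_smul_top_iff' b2]
      intro t
      rw [map_sub, Finsupp.sub_apply, hrepr t]
      simp only [hc]
      by_cases hlt : a t < i
      · rw [if_pos hlt, zero_sub, dvd_neg]
        have h2 := h t hlt
        rw [hΘmk, hθval] at h2
        exact Ideal.mem_span_singleton.mp ((Submodule.Quotient.mk_eq_zero _).mp h2)
      · rw [if_neg hlt, sub_self]
        exact dvd_zero p
  -- the bound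
  set tl : Fin m := ⟨m - 1, by omega⟩ with htl
  have hle : ∀ t : Fin m, a t ≤ a tl := by
    intro t
    apply hamono
    have h1 := t.2
    have h2 : (tl : ℕ) = m - 1 := rfl
    rw [Fin.le_def, h2]
    omega
  refine ⟨a tl + 1, ?_, ?_, a, hamono, ⟨b2, bN', ?_⟩, ?_⟩
  · -- Mbar ℓ = ⊥
    rw [Submodule.eq_bot_iff]
    intro z hz
    apply hΘzero
    funext t
    exact (hMbar _ z).mp hz t (Nat.lt_succ_of_le (hle t))
  · -- Mbar i ≠ ⊥ for i < ℓ
    intro i hi hbot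
    have hzmem : S.mkQ (b2 tl) ∈ Mbar i := by
      rw [hMbar]
      intro t ht
      rw [hΘmk, hθval, Basis.repr_self, Finsupp.single_apply, if_neg]
      · exact (Submodule.Quotient.mk_eq_zero _).mpr (Ideal.zero_mem _)
      · intro hc
        rw [← hc] at ht
        omega
    rw [hbot, Submodule.mem_bot] at hzmem
    have h1 : Θ (S.mkQ (b2 tl)) tl = 0 := by rw [hzmem, map_zero, Pi.zero_apply]
    rw [hΘmk, hθval, Basis.repr_self, Finsupp.single_apply, if_pos rfl] at h1
    have h2 : (1 : R) ∈ (Ideal.span {p} : Ideal R) :=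
      (Submodule.Quotient.mk_eq_zero _).mp h1
    exact hp.not_isUnit (isUnit_of_dvd_one (Ideal.mem_span_singleton.mp h2))
  · -- matrix form
    intro t j
    rw [LinearMap.toMatrix_apply, hdiag t, map_smul, Finsupp.smul_apply, Basis.repr_self,
      Finsupp.single_apply, smul_eq_mul]
    have hiff : ((⟨t.1, lt_of_lt_of_le t.2 hmn⟩ : Fin nN) = j) ↔ ((j : ℕ) = (t : ℕ)) := by
      constructor
      · intro hcon
        exact (congrArg Fin.val hcon).symm
      · intro hcon
        exact Fin.ext hcon.symm
    by_cases hji : (j : ℕ) = (t : ℕ)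
    · rw [if_pos (hiff.mpr hji), if_pos hji, mul_one]
    · rw [if_neg (fun hcon => hji (hiff.mp hcon)), if_neg hji, mul_zero]
  · -- dimension count
    intro i hi
    set d := (Finset.univ.filter (fun j : Fin m => a j = i)).card with hd
    have hcard : Fintype.card {t : Fin m // a t = i} = d := by
      rw [hd, Fintype.card_subtype]
    set e : {t : Fin m // a t = i} ≃ Fin d := Fintype.equivFinOfCardEq hcard with he
    set ψ : ↥(Mbar i) →ₗ[R] (Fin d → R ⧸ (Ideal.span {p} : Ideal R)) :=
      LinearMap.pi (fun j =>
        (LinearMap.proj ((e.symm j : {t : Fin m // a t = i}) : Fin m)).comp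
          (Θ.comp (Mbar i).subtype)) with hψ
    have hψval : ∀ (z : ↥(Mbar i)) (j : Fin d), ψ z j = Θ z.1 ((e.symm j : _) : Fin m) := by
      intro z j
      rw [hψ]
      rfl
    have hker : LinearMap.ker ψ = Submodule.comap (Mbar i).subtype (Mbar (i + 1)) := by
      ext z
      rw [LinearMap.mem_ker, Submodule.mem_comap, Submodule.subtype_apply, hMbar (i + 1)]
      constructor
      · intro h t ht
        rcases lt_or_eq_of_le (Nat.lt_succ_iff.mp ht) with h1 | h1
        · exact (hMbar i z.1).mp z.2 t h1
        · have h2 : ψ z (e ⟨t, h1⟩) = Θ z.1 t := by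
            rw [hψval, Equiv.symm_apply_apply]
          rw [h, Pi.zero_apply] at h2
          exact h2.symm
      · intro h
        funext j
        rw [hψval, Pi.zero_apply]
        exact h _ (Nat.lt_succ_of_le (le_of_eq (e.symm j).2))
    have hsurj : Function.Surjective ψ := by
      intro gq
      choose glift hglift using fun j => (Ideal.span {p} : Ideal R).mkQ_surjective (gq j)
      set c : Fin m → R := fun t => if h : a t = i then glift (e ⟨t, h⟩) else 0 with hcg
      set x := b2.equivFun.symm c with hx
      have hrepr : ∀ t, b2.repr x t = c t := by
        intro t
        rw [hx, ← Basis.equivFun_apply, b2.equivFun.apply_symm_apply]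
      have hxmem : S.mkQ x ∈ Mbar i := by
        rw [hMbar]
        intro t ht
        rw [hΘmk, hθval, hrepr t]
        simp only [hcg]
        rw [dif_neg (by omega)]
        exact (Submodule.Quotient.mk_eq_zero _).mpr (Ideal.zero_mem _)
      refine ⟨⟨S.mkQ x, hxmem⟩, ?_⟩
      funext j
      rw [hψval]
      have h1 : Θ (S.mkQ x) ((e.symm j : {t : Fin m // a t = i}) : Fin m) =
          Submodule.Quotient.mk (c ((e.symm j : {t : Fin m // a t = i}) : Fin m)) := by
        rw [hΘmk, hθval, hrepr]
      rw [h1]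
      simp only [hcg]
      rw [dif_pos (e.symm j).2]
      have h2 : e ⟨((e.symm j : {t : Fin m // a t = i}) : Fin m), (e.symm j).2⟩ = j := by
        rw [Subtype.coe_eta]
        exact e.apply_symm_apply j
      rw [h2]
      have h3 := hglift j
      rw [Submodule.mkQ_apply] at h3
      exact h3
    refine ⟨d, ⟨?_⟩, rfl⟩
    rw [← hker]
    exact ψ.quotKerEquivOfSurjective hsurj
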